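/- Let M be an ergodic quantum channel and M' any quantum channel on the same finite-dimensional Hilbert space. Then for every p ∈ (0,1], the channel M_p = p M + (1-p) M' is ergodic, and its fixed point state ρ*,p satisfies ρ*,p = π ρ* + (1-π) σ for some π ∈ (0,1] and some density matrix σ, where ρ* is the fixed point of M. -/

import Mathlib

open Matrix
open scoped ComplexOrder

noncomputable section

abbrev Mat (d : ℕ) := Matrix (Fin d) (Fin d) ℂ

/-- `K` is a Kraus representation of the linear map `Φ`. -/
def IsKrausRep {d : ℕ} (Φ : Mat d →ₗ[ℂ] Mat d) {n : ℕ} (K : Fin n → Mat d) : Prop :=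
  (∀ A, Φ A = ∑ i, K i * A * (K i)ᴴ) ∧ ∑ i, (K i)ᴴ * K i = 1

/-- A quantum channel: completely positive trace-preserving map, i.e. admitting a Kraus
representation with the normalization condition. -/
def IsCPTP {d : ℕ} (Φ : Mat d →ₗ[ℂ] Mat d) : Prop :=
  ∃ (n : ℕ) (K : Fin n → Mat d), IsKrausRep Φ K

/-- A density matrix: positive semidefinite with unit trace. -/
def IsDensity {d : ℕ} (ρ : Mat d) : Prop := ρ.PosSemidef ∧ ρ.trace = 1

/-- Ergodicity: the channel has a unique fixed point density matrix. -/
def IsErgodic {d : ℕ} (Φ : Mat d →ₗ[ℂ] Mat d) : Prop :=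
  ∃! ρ : Mat d, IsDensity ρ ∧ Φ ρ = ρ

/-- The support of an operator, viewed as a subspace of `ℂ^d`. -/
def supp {d : ℕ} (ρ : Mat d) : Submodule ℂ (Fin d → ℂ) := LinearMap.range ρ.mulVecLin

/-- The positive semidefinite square root of a positive semidefinite matrix
(the definition of the removed `Matrix.PosSemidef.sqrt`). -/
def posSemidefSqrt {d : ℕ} {A : Mat d} (hA : A.PosSemidef) : Mat d :=
  hA.1.eigenvectorUnitary.1 * diagonal ((↑) ∘ (√·) ∘ hA.1.eigenvalues) *
  (star hA.1.eigenvectorUnitary : Mat d)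

/-- The trace norm `‖A‖₁ = Tr √(A†A)`. -/
def traceNorm {d : ℕ} (A : Mat d) : ℝ :=
  ((posSemidefSqrt (Matrix.posSemidef_conjTranspose_mul_self A)).trace).re

/-- Mixing: iterates of the channel converge in trace norm to a unique state. -/
def IsMixing {d : ℕ} (Φ : Mat d →ₗ[ℂ] Mat d) : Prop :=
  ∃ ρs : Mat d, IsDensity ρs ∧ ∀ ρ : Mat d, IsDensity ρ →
    Filter.Tendsto (fun k : ℕ => traceNorm ((Φ ^ k) ρ - ρs)) Filter.atTop (nhds 0)

/-- A subspace `S` is invariant for a channel if every Kraus operator (of any Kraus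
representation) maps `S` into itself. -/
def IsInvariantSubspace {d : ℕ} (Φ : Mat d →ₗ[ℂ] Mat d) (S : Submodule ℂ (Fin d → ℂ)) : Prop :=
  ∀ (n : ℕ) (K : Fin n → Mat d), IsKrausRep Φ K → ∀ i, ∀ x ∈ S, (K i).mulVec x ∈ S

namespace ErgAux
open Matrix
variable {d : ℕ}

/-- Functional calculus via the spectral theorem. -/
def specF {A : Mat d} (hA : A.IsHermitian) (f : ℝ → ℝ) : Mat d :=
  (hA.eigenvectorUnitary : Mat d) * diagonal (fun i => (f (hA.eigenvalues i) : ℂ)) *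
    star (hA.eigenvectorUnitary : Mat d)

lemma unit_mul {A : Mat d} (hA : A.IsHermitian) :
    star (hA.eigenvectorUnitary : Mat d) * (hA.eigenvectorUnitary : Mat d) = 1 :=
  Matrix.mem_unitaryGroup_iff'.mp (hA.eigenvectorUnitary).2

lemma mul_unit {A : Mat d} (hA : A.IsHermitian) :
    (hA.eigenvectorUnitary : Mat d) * star (hA.eigenvectorUnitary : Mat d) = 1 :=
  Matrix.mem_unitaryGroup_iff.mp (hA.eigenvectorUnitary).2

lemma specF_mul {A : Mat d} (hA : A.IsHermitian) (f g : ℝ → ℝ) :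
    specF hA f * specF hA g = specF hA (fun x => f x * g x) := by
  unfold specF
  set U := (hA.eigenvectorUnitary : Mat d)
  calc U * diagonal (fun i => (f (hA.eigenvalues i) : ℂ)) * star U *
        (U * diagonal (fun i => (g (hA.eigenvalues i) : ℂ)) * star U)
      = U * (diagonal (fun i => (f (hA.eigenvalues i) : ℂ)) * (star U * U) *
          diagonal (fun i => (g (hA.eigenvalues i) : ℂ))) * star U := by
        simp only [Matrix.mul_assoc]
    _ = U * diagonal (fun i => (f (hA.eigenvalues i) * g (hA.eigenvalues i) : ℂ)) * star U := by
        rw [unit_mul, Matrix.mul_one, diagonal_mul_diagonal]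
    _ = _ := by push_cast; rfl

lemma specF_conjT {A : Mat d} (hA : A.IsHermitian) (f : ℝ → ℝ) :
    (specF hA f)ᴴ = specF hA f := by
  unfold specF
  set U := (hA.eigenvectorUnitary : Mat d)
  rw [conjTranspose_mul, conjTranspose_mul, diagonal_conjTranspose,
    ← Matrix.star_eq_conjTranspose U, ← Matrix.star_eq_conjTranspose (star U), star_star]
  have : (star fun i => (f (hA.eigenvalues i) : ℂ)) = fun i => (f (hA.eigenvalues i) : ℂ) := by
    funext i; simp [Complex.star_def]
  rw [this, Matrix.mul_assoc]

lemma specF_psd {A : Mat d} (hA : A.IsHermitian) (f : ℝ → ℝ) (hf : ∀ x, 0 ≤ f x) :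
    (specF hA f).PosSemidef := by
  unfold specF
  have hd : (diagonal (fun i => (f (hA.eigenvalues i) : ℂ))).PosSemidef := by
    refine posSemidef_diagonal_iff.mpr fun i => ?_
    rw [Complex.zero_le_real]
    exact hf _
  have h2 := hd.mul_mul_conjTranspose_same (hA.eigenvectorUnitary : Mat d)
  rwa [← Matrix.star_eq_conjTranspose] at h2


lemma specF_trace {A : Mat d} (hA : A.IsHermitian) (f : ℝ → ℝ) :
    (specF hA f).trace = ((∑ i, f (hA.eigenvalues i) : ℝ) : ℂ) := by
  unfold specF
  rw [trace_mul_cycle, unit_mul, Matrix.one_mul, trace_diagonal]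
  push_cast; rfl

lemma specF_id {A : Mat d} (hA : A.IsHermitian) : specF hA (fun x => x) = A := by
  conv_rhs => rw [hA.spectral_theorem]
  rfl

lemma specF_sub {A : Mat d} (hA : A.IsHermitian) (f g : ℝ → ℝ) :
    specF hA f - specF hA g = specF hA (fun x => f x - g x) := by
  unfold specF
  rw [← Matrix.sub_mul, ← Matrix.mul_sub, diagonal_sub]
  push_cast; rfl

lemma specF_one {A : Mat d} (hA : A.IsHermitian) : specF hA (fun _ => 1) = 1 := by
  unfold specF
  rw [show (fun i => ((1:ℝ) : ℂ)) = fun _ => (1:ℂ) by push_cast; rfl, diagonal_one,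
    Matrix.mul_one, mul_unit]

lemma unit_mulVec_eq_zero {A : Mat d} (hA : A.IsHermitian) (x : Fin d → ℂ)
    (h : (hA.eigenvectorUnitary : Mat d) *ᵥ x = 0) : x = 0 := by
  have := congrArg (fun y => star (hA.eigenvectorUnitary : Mat d) *ᵥ y) h
  simpa [Matrix.mulVec_mulVec, unit_mul hA] using this

lemma specF_kernel {A : Mat d} (hA : A.IsHermitian) (f : ℝ → ℝ) (hf : f 0 = 0)
    (v : Fin d → ℂ) (hv : A *ᵥ v = 0) : specF hA f *ᵥ v = 0 := by
  set U := (hA.eigenvectorUnitary : Mat d)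
  set y := star U *ᵥ v with hy
  have hAv : U *ᵥ (diagonal (fun i => ((hA.eigenvalues i : ℝ) : ℂ)) *ᵥ y) = 0 := by
    have hspec : U * diagonal (fun i => ((hA.eigenvalues i : ℝ) : ℂ)) * star U = A :=
      specF_id hA
    rw [hy, Matrix.mulVec_mulVec, Matrix.mulVec_mulVec, hspec]
    exact hv
  have hDy : ∀ i, ((hA.eigenvalues i : ℝ) : ℂ) * y i = 0 := by
    have := unit_mulVec_eq_zero hA _ hAv
    intro i
    have := congr_fun this i
    simpa [Matrix.mulVec_diagonal] using this
  have hDfy : diagonal (fun i => ((f (hA.eigenvalues i) : ℝ) : ℂ)) *ᵥ y = 0 := by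
    funext i
    simp only [Matrix.mulVec_diagonal, Pi.zero_apply]
    rcases eq_or_ne (hA.eigenvalues i) 0 with h0 | h0
    · rw [h0, hf]; simp
    · have : y i = 0 := by
        have h1 := hDy i
        have h2 : ((hA.eigenvalues i : ℝ) : ℂ) ≠ 0 := by
          simpa using h0
        exact (mul_eq_zero.mp h1).resolve_left h2
      rw [this, mul_zero]
  show (U * diagonal (fun i => ((f (hA.eigenvalues i) : ℝ) : ℂ)) * star U) *ᵥ v = 0
  rw [← Matrix.mulVec_mulVec, ← Matrix.mulVec_mulVec, ← hy, hDfy, Matrix.mulVec_zero]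

lemma herm_trace_eq {A : Mat d} (hA : A.IsHermitian) :
    A.trace = ((∑ i, hA.eigenvalues i : ℝ) : ℂ) := by
  conv_lhs => rw [← specF_id hA]
  exact specF_trace hA _

end ErgAux
namespace ErgAux
open Matrix
variable {d : ℕ}

lemma sum_psd {n : ℕ} (f : Fin n → Mat d) (h : ∀ i, (f i).PosSemidef) :
    (∑ i, f i).PosSemidef :=
  Finset.sum_induction f _ (fun _ _ ha hb => ha.add hb) Matrix.PosSemidef.zero
    (fun i _ => h i)

lemma cptp_psd {Φ : Mat d →ₗ[ℂ] Mat d} (hΦ : IsCPTP Φ) {A : Mat d} (hA : A.PosSemidef) :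
    (Φ A).PosSemidef := by
  obtain ⟨n, K, hrep, -⟩ := hΦ
  rw [hrep]
  exact sum_psd _ fun i => hA.mul_mul_conjTranspose_same _

lemma cptp_trace {Φ : Mat d →ₗ[ℂ] Mat d} (hΦ : IsCPTP Φ) (A : Mat d) :
    (Φ A).trace = A.trace := by
  obtain ⟨n, K, hrep, hnorm⟩ := hΦ
  rw [hrep, trace_sum]
  have : ∀ i : Fin n, (K i * A * (K i)ᴴ).trace = ((K i)ᴴ * K i * A).trace := by
    intro i; rw [trace_mul_cycle]
  simp_rw [this, ← trace_sum, ← Finset.sum_mul, hnorm, one_mul]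

lemma cptp_conjT {Φ : Mat d →ₗ[ℂ] Mat d} (hΦ : IsCPTP Φ) (A : Mat d) :
    Φ Aᴴ = (Φ A)ᴴ := by
  obtain ⟨n, K, hrep, -⟩ := hΦ
  rw [hrep, hrep, conjTranspose_sum]
  congr 1; ext i
  rw [conjTranspose_mul, conjTranspose_mul, conjTranspose_conjTranspose, mul_assoc]

section PsdAux
open scoped MatrixOrder Matrix.Norms.L2Operator
lemma psd_eq_ct_mul_self {A : Mat d} (hA : A.PosSemidef) : ∃ B : Mat d, A = Bᴴ * B := by
  obtain ⟨B, hB⟩ := CStarAlgebra.nonneg_iff_eq_star_mul_self.mp hA.nonneg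
  exact ⟨B, hB⟩
end PsdAux

lemma psd_trace_zero {A : Mat d} (hA : A.PosSemidef) (h : A.trace = 0) : A = 0 := by
  obtain ⟨B, rfl⟩ := psd_eq_ct_mul_self hA
  have h2 : ∀ i ∈ Finset.univ, (0:ℂ) ≤ (Bᴴ * B) i i := by
    intro i _
    simpa [Matrix.mul_apply, Matrix.conjTranspose_apply, dotProduct] using
      dotProduct_star_self_nonneg (fun k => B k i)
  have h3 := (Finset.sum_eq_zero_iff_of_nonneg h2).mp h
  have h4 : B = 0 := by
    ext k i
    have h5 : dotProduct (star (fun k => B k i)) (fun k => B k i) = 0 := by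
      have := h3 i (Finset.mem_univ i)
      simpa [Matrix.mul_apply, Matrix.conjTranspose_apply, dotProduct] using this
    exact congr_fun (dotProduct_star_self_eq_zero.mp h5) k
  rw [h4]; simp

lemma psd_trace_nonneg {A : Mat d} (hA : A.PosSemidef) : 0 ≤ A.trace := by
  obtain ⟨B, rfl⟩ := psd_eq_ct_mul_self hA
  have h2 : ∀ i ∈ Finset.univ, (0:ℂ) ≤ (Bᴴ * B) i i := by
    intro i _
    simpa [Matrix.mul_apply, Matrix.conjTranspose_apply, dotProduct] using
      dotProduct_star_self_nonneg (fun k => B k i)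
  exact Finset.sum_nonneg h2

end ErgAux
namespace ErgAux
open Matrix
variable {d : ℕ}

def posP {A : Mat d} (hA : A.IsHermitian) : Mat d := specF hA (fun x => max x 0)
def negP {A : Mat d} (hA : A.IsHermitian) : Mat d := specF hA (fun x => max (-x) 0)

lemma posP_psd {A : Mat d} (hA : A.IsHermitian) : (posP hA).PosSemidef :=
  specF_psd hA _ (fun x => le_max_right x 0)

lemma negP_psd {A : Mat d} (hA : A.IsHermitian) : (negP hA).PosSemidef :=
  specF_psd hA _ (fun x => le_max_right (-x) 0)

lemma posP_sub_negP {A : Mat d} (hA : A.IsHermitian) : posP hA - negP hA = A := by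
  rw [posP, negP, specF_sub]
  have : (fun x => max x 0 - max (-x) 0) = fun x : ℝ => x := by
    funext x; rcases le_total x 0 with h | h <;> simp [max_def] <;> split_ifs <;> linarith
  rw [this, specF_id]

lemma posP_kernel {A : Mat d} (hA : A.IsHermitian) (v : Fin d → ℂ) (hv : A *ᵥ v = 0) :
    posP hA *ᵥ v = 0 :=
  specF_kernel hA _ (by simp) v hv

lemma specF_add {A : Mat d} (hA : A.IsHermitian) (f g : ℝ → ℝ) :
    specF hA f + specF hA g = specF hA (fun x => f x + g x) := by
  unfold specF
  rw [← Matrix.add_mul, ← Matrix.mul_add, diagonal_add]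
  push_cast; rfl

lemma psd_sandwich_zero {B Q : Mat d} (hB : B.PosSemidef) (hQ : Qᴴ = Q)
    (h : Q * B * Q = 0) : B * Q = 0 ∧ Q * B = 0 := by
  obtain ⟨C, rfl⟩ := psd_eq_ct_mul_self hB
  have h1 : (C * Q)ᴴ * (C * Q) = 0 := by
    rw [conjTranspose_mul, hQ]
    calc Q * Cᴴ * (C * Q) = Q * (Cᴴ * C) * Q := by rw [Matrix.mul_assoc, Matrix.mul_assoc,
          Matrix.mul_assoc]
    _ = 0 := h
  have h2 : C * Q = 0 := conjTranspose_mul_self_eq_zero.mp h1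
  have h3 : Cᴴ * C * Q = 0 := by rw [Matrix.mul_assoc, h2, Matrix.mul_zero]
  refine ⟨h3, ?_⟩
  have h4 : (Cᴴ * C * Q)ᴴ = 0 := by rw [h3]; simp
  rwa [conjTranspose_mul, conjTranspose_mul, conjTranspose_conjTranspose, hQ] at h4

/-- Key lemma: the positive and negative parts of a fixed Hermitian point are fixed. -/
lemma fixed_parts {Φ : Mat d →ₗ[ℂ] Mat d} (hΦ : IsCPTP Φ) {A : Mat d} (hA : A.IsHermitian)
    (hfix : Φ A = A) : Φ (posP hA) = posP hA ∧ Φ (negP hA) = negP hA := by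
  classical
  set P := specF hA (fun x => if 0 < x then 1 else 0) with hPdef
  set Q := specF hA (fun x => if 0 < x then 0 else 1) with hQdef
  have hPQ : P + Q = 1 := by
    rw [hPdef, hQdef, specF_add]
    have : (fun x : ℝ => (if 0 < x then (1:ℝ) else 0) + (if 0 < x then 0 else 1)) =
        fun _ => (1:ℝ) := by funext x; split_ifs <;> ring
    rw [this, specF_one]
  have hPH : Pᴴ = P := specF_conjT hA _
  have hQH : Qᴴ = Q := specF_conjT hA _
  have hPP : P * P = P := by
    rw [hPdef, specF_mul]
    have : (fun x : ℝ => (if 0 < x then (1:ℝ) else 0) * (if 0 < x then 1 else 0)) =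
        fun x : ℝ => if 0 < x then (1:ℝ) else 0 := by funext x; split_ifs <;> ring
    rw [this]
  have hQQ : Q * Q = Q := by
    rw [hQdef, specF_mul]
    have : (fun x : ℝ => (if 0 < x then (0:ℝ) else 1) * (if 0 < x then 0 else 1)) =
        fun x : ℝ => if 0 < x then (0:ℝ) else 1 := by funext x; split_ifs <;> ring
    rw [this]
  have hPAP : P * A * P = posP hA := by
    conv_lhs => rw [← specF_id hA]
    rw [hPdef, specF_mul, specF_mul, posP]
    have : (fun x : ℝ => (if 0 < x then (1:ℝ) else 0) * x * (if 0 < x then 1 else 0)) =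
        fun x : ℝ => max x 0 := by
      funext x
      rcases lt_or_ge 0 x with h | h
      · simp [h, max_eq_left h.le]
      · simp [h.not_gt, max_eq_right h]
    rw [this]
  set B := Φ (posP hA) with hBdef
  have hBpsd : B.PosSemidef := cptp_psd hΦ (posP_psd hA)
  have hBA : B - A = Φ (negP hA) := by
    have h0 : Φ (posP hA) - Φ (negP hA) = A := by
      rw [← map_sub, posP_sub_negP, hfix]
    have h2 : Φ (negP hA) = Φ (posP hA) - A := by
      have h3 := sub_eq_iff_eq_add.mp h0
      rw [h3]; abel
    rw [hBdef, h2]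
  have hBApsd : (B - A).PosSemidef := by rw [hBA]; exact cptp_psd hΦ (negP_psd hA)
  have htrB : B.trace = (posP hA).trace := cptp_trace hΦ _
  -- trace decomposition
  have hdec : B.trace = (P * B * P).trace + (Q * B * Q).trace := by
    rw [trace_mul_cycle (A := P) (B := B) (C := P), hPP,
      trace_mul_cycle (A := Q) (B := B) (C := Q), hQQ,
      ← trace_add, ← Matrix.add_mul, hPQ, Matrix.one_mul]
  have hPBP : (P * B * P).trace = (posP hA).trace + (P * (B - A) * P).trace := by
    have : P * (B - A) * P = P * B * P - P * A * P := by
      rw [Matrix.mul_sub, Matrix.sub_mul]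
    rw [this, trace_sub, hPAP]; ring
  have hsand : (P * (B - A) * P).PosSemidef := by
    have := hBApsd.mul_mul_conjTranspose_same P
    rwa [hPH] at this
  have hsandQ : (Q * B * Q).PosSemidef := by
    have := hBpsd.mul_mul_conjTranspose_same Q
    rwa [hQH] at this
  have hzero : (P * (B - A) * P).trace + (Q * B * Q).trace = 0 := by
    have := htrB
    rw [hdec, hPBP] at this
    have h2 : (posP hA).trace + ((P * (B - A) * P).trace + (Q * B * Q).trace)
        = (posP hA).trace + 0 := by rw [add_zero, ← add_assoc]; exact this
    exact add_left_cancel h2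
  have h1 : (P * (B - A) * P).trace = 0 ∧ (Q * B * Q).trace = 0 := by
    constructor
    · refine le_antisymm ?_ (psd_trace_nonneg hsand)
      calc (P * (B - A) * P).trace = -(Q * B * Q).trace := by
            rw [eq_neg_iff_add_eq_zero]; exact hzero
      _ ≤ 0 := by simpa using neg_nonpos_of_nonneg (psd_trace_nonneg hsandQ)
    · refine le_antisymm ?_ (psd_trace_nonneg hsandQ)
      calc (Q * B * Q).trace = -(P * (B - A) * P).trace := by
            rw [eq_neg_iff_add_eq_zero, add_comm]; exact hzero
      _ ≤ 0 := by simpa using neg_nonpos_of_nonneg (psd_trace_nonneg hsand)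
  have hQBQ : Q * B * Q = 0 := psd_trace_zero hsandQ h1.2
  have hPBAP : P * (B - A) * P = 0 := psd_trace_zero hsand h1.1
  obtain ⟨hBQ, hQB⟩ := psd_sandwich_zero hBpsd hQH hQBQ
  have hBfull : B = P * B * P := by
    calc B = (P + Q) * B * (P + Q) := by rw [hPQ, Matrix.one_mul, Matrix.mul_one]
    _ = P * B * P + P * B * Q + (Q * B * P + Q * B * Q) := by
        simp only [Matrix.add_mul, Matrix.mul_add]; abel
    _ = P * B * P := by
        rw [hQBQ, Matrix.mul_assoc P B Q, hBQ, Matrix.mul_zero, Matrix.mul_assoc Q B P,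
          ← Matrix.mul_assoc, hQB, Matrix.zero_mul]
        abel
  have hBpos : B = posP hA := by
    have heq : P * (B - A) * P = P * B * P - P * A * P := by
      rw [Matrix.mul_sub, Matrix.sub_mul]
    have h5 : P * B * P - P * A * P = 0 := by rw [← heq]; exact hPBAP
    rw [hBfull, ← hPAP, ← sub_eq_zero]
    exact h5
  refine ⟨hBpos ▸ hBdef ▸ rfl, ?_⟩
  have h6 : Φ (negP hA) = B - A := hBA.symm
  rw [h6, hBpos]
  exact sub_eq_iff_eq_add'.mpr (sub_eq_iff_eq_add.mp (posP_sub_negP hA))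

end ErgAux
namespace ErgAux
open Matrix
variable {d : ℕ}

lemma sum_mulVec {n : ℕ} (f : Fin n → Mat d) (v : Fin d → ℂ) :
    (∑ i, f i) *ᵥ v = ∑ i, f i *ᵥ v := by
  ext j
  simp only [Matrix.mulVec, dotProduct, Finset.sum_apply, Matrix.sum_apply,
    Finset.sum_mul]
  rw [Finset.sum_comm]

lemma exists_herm_fixed (Φ : Mat d →ₗ[ℂ] Mat d)
    (htr : ∀ A : Mat d, (Φ A).trace = A.trace) (hconj : ∀ A : Mat d, Φ Aᴴ = (Φ A)ᴴ)
    (V : Submodule ℂ (Mat d)) (hV : ∀ A ∈ V, Φ A ∈ V) (hstar : ∀ A ∈ V, Aᴴ ∈ V)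
    (B : Mat d) (hB : B ∈ V) (hBtr : B.trace ≠ 0) :
    ∃ Y : Mat d, Y ∈ V ∧ Y ≠ 0 ∧ Y.IsHermitian ∧ Φ Y = Y := by
  classical
  -- step 1: a nonzero fixed point in V
  have hmain : ∃ X : Mat d, X ∈ V ∧ X ≠ 0 ∧ Φ X = X := by
    set e : V →ₗ[ℂ] V := Φ.restrict hV - LinearMap.id with he
    by_cases hinj : Function.Injective e
    · exfalso
      have hsurj : Function.Surjective e := LinearMap.injective_iff_surjective.mp hinj
      obtain ⟨x, hx⟩ := hsurj ⟨B, hB⟩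
      have : ((e x : Mat d)).trace = 0 := by
        have : (e x : Mat d) = Φ (x : Mat d) - (x : Mat d) := rfl
        rw [this, trace_sub, htr, sub_self]
      rw [hx] at this
      exact hBtr this
    · rw [injective_iff_map_eq_zero e] at hinj
      push_neg at hinj
      obtain ⟨x, hx1, hx2⟩ := hinj
      refine ⟨(x : Mat d), x.2, ?_, ?_⟩
      · intro h0
        exact hx2 (Subtype.ext h0)
      · have h1 : (e x : Mat d) = Φ (x : Mat d) - (x : Mat d) := rfl
        have h2 : Φ (x : Mat d) - (x : Mat d) = 0 := by
          rw [← h1, hx1]; rfl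
        exact sub_eq_zero.mp h2
  obtain ⟨X, hXV, hX0, hXfix⟩ := hmain
  by_cases hherm : X + Xᴴ ≠ 0
  · refine ⟨X + Xᴴ, V.add_mem hXV (hstar X hXV), hherm, ?_, ?_⟩
    · unfold Matrix.IsHermitian
      rw [conjTranspose_add, conjTranspose_conjTranspose, add_comm]
    · rw [map_add, hXfix, hconj, hXfix]
  · push_neg at hherm
    have hXH : Xᴴ = -X := by
      have h3 := hherm
      rw [add_comm, add_eq_zero_iff_eq_neg] at h3
      exact h3
    refine ⟨Complex.I • X, Submodule.smul_mem V _ hXV, ?_, ?_, ?_⟩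
    · simp only [ne_eq, smul_eq_zero, Complex.I_ne_zero, false_or]
      exact hX0
    · unfold Matrix.IsHermitian
      rw [conjTranspose_smul, hXH]
      simp [Complex.star_def, Complex.conj_I]
    · rw [LinearMap.map_smul, hXfix]

end ErgAux
namespace ErgAux
open Matrix
variable {d : ℕ}

lemma psd_smul {A : Mat d} (hA : A.PosSemidef) {c : ℝ} (hc : 0 ≤ c) :
    ((c : ℂ) • A).PosSemidef := by
  refine PosSemidef.of_dotProduct_mulVec_nonneg ?_ ?_
  · unfold Matrix.IsHermitian
    rw [conjTranspose_smul, hA.1]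
    congr 1
    simp [Complex.star_def]
  · intro x
    have h1 := hA.dotProduct_mulVec_nonneg x
    have h2 : star x ⬝ᵥ ((c : ℂ) • A) *ᵥ x = (c : ℂ) * (star x ⬝ᵥ A *ᵥ x) := by
      rw [smul_mulVec, dotProduct_smul, smul_eq_mul]
    rw [h2]
    exact mul_nonneg (by rw [Complex.zero_le_real]; exact hc) h1

lemma psd_trace_real {A : Mat d} (hA : A.PosSemidef) :
    ∃ t : ℝ, 0 ≤ t ∧ A.trace = (t : ℂ) ∧ (A ≠ 0 → 0 < t) := by
  refine ⟨∑ i, hA.1.eigenvalues i, Finset.sum_nonneg fun i _ => hA.eigenvalues_nonneg i,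
    herm_trace_eq hA.1, ?_⟩
  intro hA0
  rcases (Finset.sum_nonneg fun i (_ : i ∈ Finset.univ) => hA.eigenvalues_nonneg i).lt_or_eq
    with h | h
  · exact h
  · exfalso
    apply hA0
    apply psd_trace_zero hA
    rw [herm_trace_eq hA.1, ← h]
    simp

/-- Normalizing a nonzero PSD matrix gives a density matrix. -/
lemma psd_normalize {A : Mat d} (hA : A.PosSemidef) (h0 : A ≠ 0) :
    ∃ t : ℝ, 0 < t ∧ IsDensity (((t : ℂ))⁻¹ • A) := by
  obtain ⟨t, ht0, htr, hpos⟩ := psd_trace_real hA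
  have ht := hpos h0
  refine ⟨t, ht, ?_, ?_⟩
  · have : ((t : ℂ))⁻¹ = ((t⁻¹ : ℝ) : ℂ) := by push_cast; ring
    rw [this]
    exact psd_smul hA (inv_nonneg.mpr ht0)
  · rw [trace_smul, htr, smul_eq_mul]
    field_simp

section Comb

variable {p : ℝ} {Φ Φ' : Mat d →ₗ[ℂ] Mat d}

lemma comb_apply (A : Mat d) :
    ((p : ℂ) • Φ + ((1 - p : ℝ) : ℂ) • Φ') A = (p : ℂ) • Φ A + ((1 - p : ℝ) : ℂ) • Φ' A := by
  simp [LinearMap.add_apply, LinearMap.smul_apply]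

lemma comb_cptp (hp : 0 ≤ p) (hp1 : p ≤ 1) (hΦ : IsCPTP Φ) (hΦ' : IsCPTP Φ') :
    IsCPTP ((p : ℂ) • Φ + ((1 - p : ℝ) : ℂ) • Φ') := by
  obtain ⟨n, K, hKrep, hKnorm⟩ := hΦ
  obtain ⟨m, L, hLrep, hLnorm⟩ := hΦ'
  refine ⟨n + m, Fin.addCases (fun i => (Real.sqrt p : ℂ) • K i)
    (fun j => (Real.sqrt (1 - p) : ℂ) • L j), ?_, ?_⟩
  · intro A
    rw [comb_apply, hKrep, hLrep, Fin.sum_univ_add]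
    simp only [Fin.addCases_left, Fin.addCases_right]
    have hterm : ∀ (c : ℝ) (M : Mat d), 0 ≤ c →
        ((Real.sqrt c : ℂ) • M) * A * ((Real.sqrt c : ℂ) • M)ᴴ = (c : ℂ) • (M * A * Mᴴ) := by
      intro c M hc
      rw [conjTranspose_smul, Matrix.smul_mul, Matrix.smul_mul, Matrix.mul_smul, smul_smul]
      congr 1
      rw [Complex.star_def, Complex.conj_ofReal, ← Complex.ofReal_mul, Real.mul_self_sqrt hc]

    rw [Finset.smul_sum, Finset.smul_sum]
    congr 1
    · exact (Finset.sum_congr rfl fun i _ => (hterm p (K i) hp).symm)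
    · exact (Finset.sum_congr rfl fun j _ => (hterm (1 - p) (L j) (by linarith)).symm)
  · rw [Fin.sum_univ_add]
    simp only [Fin.addCases_left, Fin.addCases_right]
    have hterm : ∀ (c : ℝ) (M : Mat d), 0 ≤ c →
        ((Real.sqrt c : ℂ) • M)ᴴ * ((Real.sqrt c : ℂ) • M) = (c : ℂ) • (Mᴴ * M) := by
      intro c M hc
      rw [conjTranspose_smul, Matrix.smul_mul, Matrix.mul_smul, smul_smul]
      congr 1
      rw [Complex.star_def, Complex.conj_ofReal, ← Complex.ofReal_mul, Real.mul_self_sqrt hc]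
    have e1 : ∀ i : Fin n, ((Real.sqrt p : ℂ) • K i)ᴴ * ((Real.sqrt p : ℂ) • K i)
        = (p : ℂ) • ((K i)ᴴ * K i) := fun i => hterm p (K i) hp
    have e2 : ∀ j : Fin m, ((Real.sqrt (1-p) : ℂ) • L j)ᴴ * ((Real.sqrt (1-p) : ℂ) • L j)
        = ((1-p : ℝ) : ℂ) • ((L j)ᴴ * L j) := fun j => hterm (1-p) (L j) (by linarith)
    rw [Finset.sum_congr rfl fun i _ => e1 i, Finset.sum_congr rfl fun j _ => e2 j,
      ← Finset.smul_sum, ← Finset.smul_sum, hKnorm, hLnorm, ← add_smul]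
    have : (p : ℂ) + ((1 - p : ℝ) : ℂ) = 1 := by push_cast; ring
    rw [this, one_smul]

end Comb
end ErgAux
namespace ErgAux
open Matrix
variable {d : ℕ}

lemma dot_sandwich (K η : Mat d) (v : Fin d → ℂ) :
    star v ⬝ᵥ (K * η * Kᴴ) *ᵥ v = star (Kᴴ *ᵥ v) ⬝ᵥ η *ᵥ (Kᴴ *ᵥ v) := by
  calc star v ⬝ᵥ (K * η * Kᴴ) *ᵥ v = star v ⬝ᵥ K *ᵥ (η *ᵥ (Kᴴ *ᵥ v)) := by
        rw [Matrix.mulVec_mulVec, Matrix.mulVec_mulVec]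
  _ = (star v ᵥ* K) ⬝ᵥ (η *ᵥ (Kᴴ *ᵥ v)) := dotProduct_mulVec _ _ _
  _ = star (Kᴴ *ᵥ v) ⬝ᵥ η *ᵥ (Kᴴ *ᵥ v) := by rw [star_mulVec, conjTranspose_conjTranspose]

lemma dotProduct_finsum {n : ℕ} (v : Fin d → ℂ) (w : Fin n → Fin d → ℂ) :
    v ⬝ᵥ (∑ i, w i) = ∑ i, v ⬝ᵥ w i := by
  simp only [dotProduct, Finset.sum_apply, Finset.mul_sum]
  exact Finset.sum_comm

lemma comb_kernel_inv {p : ℝ} {Φ Φ' : Mat d →ₗ[ℂ] Mat d} {n : ℕ} {K : Fin n → Mat d}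
    (hK : IsKrausRep Φ K) (hΦ' : IsCPTP Φ') (hp : 0 < p) (hp1 : p ≤ 1)
    {η : Mat d} (hη : η.PosSemidef)
    (hfix : ((p : ℂ) • Φ + ((1 - p : ℝ) : ℂ) • Φ') η = η)
    (i : Fin n) (v : Fin d → ℂ) (hv : η *ᵥ v = 0) : η *ᵥ ((K i)ᴴ *ᵥ v) = 0 := by
  obtain ⟨m, L, hLrep, -⟩ := hΦ'
  set S1 : ℂ := ∑ i, star ((K i)ᴴ *ᵥ v) ⬝ᵥ η *ᵥ ((K i)ᴴ *ᵥ v) with hS1def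
  set S2 : ℂ := ∑ j, star ((L j)ᴴ *ᵥ v) ⬝ᵥ η *ᵥ ((L j)ᴴ *ᵥ v) with hS2def
  have hterm1 : ∀ i : Fin n, 0 ≤ star ((K i)ᴴ *ᵥ v) ⬝ᵥ η *ᵥ ((K i)ᴴ *ᵥ v) :=
    fun i => hη.dotProduct_mulVec_nonneg _
  have hterm2 : ∀ j : Fin m, 0 ≤ star ((L j)ᴴ *ᵥ v) ⬝ᵥ η *ᵥ ((L j)ᴴ *ᵥ v) :=
    fun j => hη.dotProduct_mulVec_nonneg _
  have hS1 : 0 ≤ S1 := Finset.sum_nonneg fun i _ => hterm1 i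
  have hS2 : 0 ≤ S2 := Finset.sum_nonneg fun j _ => hterm2 j
  have h0 : (p : ℂ) * S1 + ((1 - p : ℝ) : ℂ) * S2 = 0 := by
    have h1 : star v ⬝ᵥ η *ᵥ v = 0 := by rw [hv, dotProduct_zero]
    calc (p : ℂ) * S1 + ((1 - p : ℝ) : ℂ) * S2
        = star v ⬝ᵥ (((p : ℂ) • Φ + ((1 - p : ℝ) : ℂ) • Φ') η) *ᵥ v := by
          rw [comb_apply, hK.1, hLrep, add_mulVec, smul_mulVec, smul_mulVec,
            dotProduct_add, dotProduct_smul, dotProduct_smul, sum_mulVec, sum_mulVec,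
            dotProduct_finsum, dotProduct_finsum]
          simp only [smul_eq_mul, hS1def, hS2def]
          congr 2
          · exact Finset.sum_congr rfl fun i _ => (dot_sandwich (K i) η v).symm
          · exact Finset.sum_congr rfl fun j _ => (dot_sandwich (L j) η v).symm
    _ = 0 := by rw [hfix]; exact h1
  have hp' : (0:ℂ) ≤ (p : ℂ) := by rw [Complex.zero_le_real]; exact hp.le
  have hq' : (0:ℂ) ≤ ((1 - p : ℝ) : ℂ) := by rw [Complex.zero_le_real]; linarith
  have hpS1 : (p : ℂ) * S1 = 0 := by
    refine le_antisymm ?_ (mul_nonneg hp' hS1)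
    have := mul_nonneg hq' hS2
    calc (p : ℂ) * S1 = -(((1 - p : ℝ) : ℂ) * S2) := by
          rw [eq_neg_iff_add_eq_zero]; exact h0
    _ ≤ 0 := neg_nonpos_of_nonneg this
  have hS1zero : S1 = 0 := by
    rcases mul_eq_zero.mp hpS1 with h | h
    · exfalso
      rw [Complex.ofReal_eq_zero] at h
      exact hp.ne' h
    · exact h
  have heach := (Finset.sum_eq_zero_iff_of_nonneg fun i (_ : i ∈ Finset.univ) =>
    hterm1 i).mp hS1zero i (Finset.mem_univ i)
  exact (hη.dotProduct_mulVec_zero_iff _).mp heach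

end ErgAux
namespace ErgAux
open Matrix
variable {d : ℕ}

lemma negP_kernel {A : Mat d} (hA : A.IsHermitian) (v : Fin d → ℂ) (hv : A *ᵥ v = 0) :
    negP hA *ᵥ v = 0 :=
  specF_kernel hA _ (by simp) v hv

lemma fixed_density_kernel {p : ℝ} {Φ Φ' : Mat d →ₗ[ℂ] Mat d}
    (hΦ : IsCPTP Φ) (hΦ' : IsCPTP Φ') (hE : IsErgodic Φ)
    {ρs : Mat d} (hρs : IsDensity ρs) (hfixρ : Φ ρs = ρs)
    (hp : 0 < p) (hp1 : p ≤ 1) {η : Mat d} (hηd : IsDensity η)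
    (hηfix : ((p : ℂ) • Φ + ((1 - p : ℝ) : ℂ) • Φ') η = η) :
    ∀ v, η *ᵥ v = 0 → ρs *ᵥ v = 0 := by
  classical
  obtain ⟨n, K, hK⟩ := hΦ
  have hΦc : IsCPTP Φ := ⟨n, K, hK⟩
  set V : Submodule ℂ (Mat d) :=
    { carrier := {A | ∀ v, η *ᵥ v = 0 → A *ᵥ v = 0 ∧ Aᴴ *ᵥ v = 0}
      add_mem' := by
        intro a b ha hb v hv
        refine ⟨?_, ?_⟩
        · rw [add_mulVec, (ha v hv).1, (hb v hv).1, add_zero]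
        · rw [conjTranspose_add, add_mulVec, (ha v hv).2, (hb v hv).2, add_zero]
      zero_mem' := by intro v hv; simp
      smul_mem' := by
        intro c a ha v hv
        refine ⟨?_, ?_⟩
        · rw [smul_mulVec, (ha v hv).1, smul_zero]
        · rw [conjTranspose_smul, smul_mulVec, (ha v hv).2, smul_zero] } with hVdef
  have hmem : ∀ A : Mat d, A ∈ V ↔ ∀ v, η *ᵥ v = 0 → A *ᵥ v = 0 ∧ Aᴴ *ᵥ v = 0 :=
    fun A => Iff.rfl
  have hkerK : ∀ (i : Fin n) (v : Fin d → ℂ), η *ᵥ v = 0 → η *ᵥ ((K i)ᴴ *ᵥ v) = 0 :=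
    fun i v hv => comb_kernel_inv hK hΦ' hp hp1 hηd.1 hηfix i v hv
  have happ : ∀ A : Mat d, (∀ v, η *ᵥ v = 0 → A *ᵥ v = 0) → ∀ v, η *ᵥ v = 0 →
      Φ A *ᵥ v = 0 := by
    intro A hA v hv
    rw [hK.1, sum_mulVec]
    apply Finset.sum_eq_zero
    intro i _
    rw [← Matrix.mulVec_mulVec, ← Matrix.mulVec_mulVec, hA _ (hkerK i v hv),
      Matrix.mulVec_zero]
  have hV : ∀ A ∈ V, Φ A ∈ V := by
    intro A hA
    rw [hmem] at hA ⊢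
    intro v hv
    refine ⟨happ A (fun w hw => (hA w hw).1) v hv, ?_⟩
    rw [← cptp_conjT hΦc A]
    exact happ Aᴴ (fun w hw => (hA w hw).2) v hv
  have hstar : ∀ A ∈ V, Aᴴ ∈ V := by
    intro A hA
    rw [hmem] at hA ⊢
    intro v hv
    exact ⟨(hA v hv).2, by rw [conjTranspose_conjTranspose]; exact (hA v hv).1⟩
  have hηV : η ∈ V := by
    rw [hmem]
    intro v hv
    exact ⟨hv, by rw [hηd.1.1]; exact hv⟩
  obtain ⟨Y, hYV, hY0, hYherm, hYfix⟩ := exists_herm_fixed Φ (cptp_trace hΦc)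
    (cptp_conjT hΦc) V hV hstar η hηV (by rw [hηd.2]; exact one_ne_zero)
  obtain ⟨hposfix, hnegfix⟩ := fixed_parts hΦc hYherm hYfix
  have hYker : ∀ v, η *ᵥ v = 0 → Y *ᵥ v = 0 := fun v hv => ((hmem Y).mp hYV v hv).1
  -- choose a nonzero PSD fixed point supported in ker η's complement
  have hZ : ∃ Z : Mat d, Z.PosSemidef ∧ Z ≠ 0 ∧ Φ Z = Z ∧
      ∀ v, η *ᵥ v = 0 → Z *ᵥ v = 0 := by
    by_cases hpos0 : posP hYherm = 0
    · refine ⟨negP hYherm, negP_psd hYherm, ?_, hnegfix, ?_⟩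
      · intro h0
        apply hY0
        rw [← posP_sub_negP hYherm, hpos0, h0, sub_zero]
      · exact fun v hv => negP_kernel hYherm v (hYker v hv)
    · exact ⟨posP hYherm, posP_psd hYherm, hpos0, hposfix,
        fun v hv => posP_kernel hYherm v (hYker v hv)⟩
  obtain ⟨Z, hZpsd, hZ0, hZfix, hZker⟩ := hZ
  obtain ⟨t, ht, htd⟩ := psd_normalize hZpsd hZ0
  have hfixt : Φ (((t : ℂ))⁻¹ • Z) = ((t : ℂ))⁻¹ • Z := by
    rw [LinearMap.map_smul, hZfix]
  obtain ⟨ρu, hρu, huniq⟩ := hE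
  have h1 : ρs = ρu := huniq ρs ⟨hρs, hfixρ⟩
  have h2 : ((t : ℂ))⁻¹ • Z = ρu := huniq _ ⟨htd, hfixt⟩
  intro v hv
  rw [h1, ← h2, smul_mulVec, hZker v hv, smul_zero]

end ErgAux
namespace ErgAux
open Matrix
variable {d : ℕ}

lemma specF_psd' {A : Mat d} (hA : A.IsHermitian) (f : ℝ → ℝ)
    (hf : ∀ i, 0 ≤ f (hA.eigenvalues i)) : (specF hA f).PosSemidef := by
  unfold specF
  have hd : (diagonal (fun i => (f (hA.eigenvalues i) : ℂ))).PosSemidef := by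
    refine posSemidef_diagonal_iff.mpr fun i => ?_
    rw [Complex.zero_le_real]
    exact hf i
  have h2 := hd.mul_mul_conjTranspose_same (hA.eigenvectorUnitary : Mat d)
  rwa [← Matrix.star_eq_conjTranspose] at h2

lemma diagonal_const (c : ℂ) : diagonal (fun _ : Fin d => c) = c • (1 : Mat d) := by
  ext i j
  by_cases h : i = j <;> simp [diagonal, Matrix.one_apply, h]

lemma smul_one_sub_psd {ρ : Mat d} (hρ : ρ.PosSemidef) :
    (ρ.trace • (1 : Mat d) - ρ).PosSemidef := by
  have hH := hρ.1
  have htr : ρ.trace = ((∑ i, hH.eigenvalues i : ℝ) : ℂ) := herm_trace_eq hH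
  have h1 : ρ.trace • (1 : Mat d) = specF hH (fun _ => ∑ i, hH.eigenvalues i) := by
    unfold specF
    rw [diagonal_const ((∑ i, hH.eigenvalues i : ℝ) : ℂ)]
    rw [Matrix.mul_smul, Matrix.smul_mul, Matrix.mul_one, mul_unit hH, htr]
  have h2 := specF_sub hH (fun _ => ∑ i, hH.eigenvalues i) (fun x => x)
  rw [specF_id] at h2
  rw [h1, h2]
  refine specF_psd' hH _ fun i => ?_
  simp only [sub_nonneg]
  exact Finset.single_le_sum (fun j _ => hρ.eigenvalues_nonneg j) (Finset.mem_univ i)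

lemma dot_le_of_density {ρ : Mat d} (hρ : IsDensity ρ) (y : Fin d → ℂ) :
    star y ⬝ᵥ ρ *ᵥ y ≤ star y ⬝ᵥ y := by
  have h1 := (smul_one_sub_psd hρ.1).dotProduct_mulVec_nonneg y
  rw [hρ.2, one_smul] at h1
  rw [sub_mulVec, dotProduct_sub, one_mulVec, sub_nonneg] at h1
  exact h1

/-- helper: `star w ⬝ᵥ A *ᵥ z = star (Aᴴ *ᵥ w) ⬝ᵥ z`. -/
lemma dot_shift (A : Mat d) (w z : Fin d → ℂ) :
    star w ⬝ᵥ A *ᵥ z = star (Aᴴ *ᵥ w) ⬝ᵥ z := by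
  rw [star_mulVec, conjTranspose_conjTranspose, dotProduct_mulVec]

lemma dot_conj_one {U : Mat d} (hU : star U * U = 1) (a b : Fin d → ℂ) :
    star (U *ᵥ a) ⬝ᵥ (U *ᵥ b) = star a ⬝ᵥ b := by
  rw [star_mulVec, dotProduct_mulVec, vecMul_vecMul, ← Matrix.star_eq_conjTranspose, hU,
    Matrix.vecMul_one]

/-- Key domination lemma: if `ker η ⊆ ker ρ` for densities, then `η ≥ c ρ` for some
`c ∈ (0,1]`. -/
lemma exists_dominating_coeff {η ρ : Mat d} (hη : IsDensity η) (hρ : IsDensity ρ)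
    (hker : ∀ v, η *ᵥ v = 0 → ρ *ᵥ v = 0) :
    ∃ c : ℝ, 0 < c ∧ c ≤ 1 ∧ (η - ((c : ℝ) : ℂ) • ρ).PosSemidef := by
  classical
  have hH := hη.1.1
  set ev := hH.eigenvalues with hev
  set U := (hH.eigenvectorUnitary : Mat d) with hU
  set T : Finset (Fin d) := Finset.univ.filter (fun i => 0 < ev i) with hT
  have hTne : T.Nonempty := by
    by_contra hTe
    rw [Finset.not_nonempty_iff_eq_empty] at hTe
    have hall : ∀ i, ev i = 0 := by
      intro i
      have h1 : i ∉ T := by rw [hTe]; exact Finset.notMem_empty i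
      rw [hT, Finset.mem_filter] at h1
      push_neg at h1
      have := h1 (Finset.mem_univ i)
      exact le_antisymm this (hη.1.eigenvalues_nonneg i)
    have hall' : ∀ i, hH.eigenvalues i = 0 := hall
    have h2 : η.trace = 0 := by
      rw [herm_trace_eq hH]
      simp [hall']
    rw [hη.2] at h2
    exact one_ne_zero h2
  have hTine : (T.image ev).Nonempty := hTne.image ev
  set c₀ : ℝ := (T.image ev).min' hTine with hc0
  have hc0pos : 0 < c₀ := by
    have h8 := (T.image ev).min'_mem hTine
    rw [Finset.mem_image] at h8
    obtain ⟨i₀, hi₀, hev₀⟩ := h8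
    rw [hT, Finset.mem_filter] at hi₀
    exact lt_of_lt_of_eq hi₀.2 hev₀
  have hc0le : ∀ i, 0 < ev i → c₀ ≤ ev i := by
    intro i hi
    exact (T.image ev).min'_le (ev i) (Finset.mem_image_of_mem ev
      (by rw [hT, Finset.mem_filter]; exact ⟨Finset.mem_univ i, hi⟩))
  have hcore : (η - ((c₀ : ℝ) : ℂ) • ρ).PosSemidef := by
    refine PosSemidef.of_dotProduct_mulVec_nonneg ?_ ?_
    · unfold Matrix.IsHermitian
      rw [conjTranspose_sub, conjTranspose_smul, hη.1.1, hρ.1.1]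
      congr 1
      simp [Complex.star_def]
    · intro x
      set y : Fin d → ℂ := star U *ᵥ x with hy
      set y1 : Fin d → ℂ := fun i => if 0 < ev i then y i else 0 with hy1
      set y0 : Fin d → ℂ := fun i => if 0 < ev i then 0 else y i with hy0
      set x1 : Fin d → ℂ := U *ᵥ y1 with hx1
      set x0 : Fin d → ℂ := U *ᵥ y0 with hx0
      have hsplit : x = x0 + x1 := by
        have h1 : y0 + y1 = y := by
          funext i
          by_cases h : 0 < ev i <;> simp [hy0, hy1, h]
        rw [hx0, hx1, ← Matrix.mulVec_add, h1, hy, Matrix.mulVec_mulVec, mul_unit hH,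
          Matrix.one_mulVec]
      have hηx0 : η *ᵥ x0 = 0 := by
        have hD : diagonal (fun i => ((ev i : ℝ) : ℂ)) *ᵥ y0 = 0 := by
          funext i
          simp only [Matrix.mulVec_diagonal, Pi.zero_apply, hy0]
          by_cases h : 0 < ev i
          · simp [h]
          · have h3 : ev i = 0 := le_antisymm (not_lt.mp h) (hη.1.eigenvalues_nonneg i)
            simp [h3]
        have hspec : η = U * diagonal (fun i => ((ev i : ℝ) : ℂ)) * star U :=
          (specF_id hH).symm
        rw [hspec, hx0, Matrix.mulVec_mulVec,
          Matrix.mul_assoc (U * diagonal (fun i => ((ev i : ℝ) : ℂ))) (star U) U,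
          unit_mul hH, Matrix.mul_one, ← Matrix.mulVec_mulVec, hD, Matrix.mulVec_zero]
      have hρx0 : ρ *ᵥ x0 = 0 := hker _ hηx0
      have hred : ∀ (M : Mat d), M.IsHermitian → M *ᵥ x0 = 0 →
          star x ⬝ᵥ M *ᵥ x = star x1 ⬝ᵥ M *ᵥ x1 := by
        intro M hM hMx0
        rw [hsplit, Matrix.mulVec_add, hMx0, zero_add, star_add, add_dotProduct]
        have h5 : star x0 ⬝ᵥ M *ᵥ x1 = 0 := by
          rw [dot_shift, hM, hMx0]
          simp
        rw [h5, zero_add]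
      rw [sub_mulVec, dotProduct_sub, smul_mulVec, dotProduct_smul, smul_eq_mul,
        sub_nonneg, hred η hη.1.1 hηx0, hred ρ hρ.1.1 hρx0]
      -- step 1: ρ-form bounded by norm
      have hstep1 : star x1 ⬝ᵥ ρ *ᵥ x1 ≤ star x1 ⬝ᵥ x1 := dot_le_of_density hρ x1
      -- norms transfer
      have hnorm : star x1 ⬝ᵥ x1 = star y1 ⬝ᵥ y1 := dot_conj_one (unit_mul hH) y1 y1
      -- step 2: η-form bounded below
      have hform : star x1 ⬝ᵥ η *ᵥ x1 = star y1 ⬝ᵥ diagonal (fun i => ((ev i : ℝ) : ℂ)) *ᵥ y1 := by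
        have hspec : η = U * diagonal (fun i => ((ev i : ℝ) : ℂ)) * star U :=
          (specF_id hH).symm
        rw [hx1, hspec]
        have h6 : (U * diagonal (fun i => ((ev i : ℝ) : ℂ)) * star U) *ᵥ (U *ᵥ y1)
            = U *ᵥ (diagonal (fun i => ((ev i : ℝ) : ℂ)) *ᵥ y1) := by
          rw [Matrix.mulVec_mulVec,
            Matrix.mul_assoc (U * diagonal (fun i => ((ev i : ℝ) : ℂ))) (star U) U,
            unit_mul hH, Matrix.mul_one, ← Matrix.mulVec_mulVec]
        rw [h6, dot_conj_one (unit_mul hH)]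
      have hstep2 : ((c₀ : ℝ) : ℂ) * (star y1 ⬝ᵥ y1) ≤
          star y1 ⬝ᵥ diagonal (fun i => ((ev i : ℝ) : ℂ)) *ᵥ y1 := by
        unfold dotProduct
        rw [Finset.mul_sum]
        refine Finset.sum_le_sum fun i _ => ?_
        simp only [Matrix.mulVec_diagonal, Pi.star_apply]
        by_cases h : 0 < ev i
        · have hle : ((c₀ : ℝ) : ℂ) ≤ ((ev i : ℝ) : ℂ) := by
            rw [Complex.real_le_real]
            exact hc0le i h
          have hnn : 0 ≤ star (y1 i) * y1 i := star_mul_self_nonneg (y1 i)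
          calc ((c₀ : ℝ) : ℂ) * (star (y1 i) * y1 i)
              ≤ ((ev i : ℝ) : ℂ) * (star (y1 i) * y1 i) := by
                exact mul_le_mul_of_nonneg_right hle hnn
          _ = star (y1 i) * (((ev i : ℝ) : ℂ) * y1 i) := by ring
        · have h7 : y1 i = 0 := by simp [hy1, h]
          rw [h7]
          simp
      calc ((c₀ : ℝ) : ℂ) * (star x1 ⬝ᵥ ρ *ᵥ x1)
          ≤ ((c₀ : ℝ) : ℂ) * (star x1 ⬝ᵥ x1) := by
            refine mul_le_mul_of_nonneg_left hstep1 ?_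
            rw [Complex.zero_le_real]
            exact hc0pos.le
      _ = ((c₀ : ℝ) : ℂ) * (star y1 ⬝ᵥ y1) := by rw [hnorm]
      _ ≤ star y1 ⬝ᵥ diagonal (fun i => ((ev i : ℝ) : ℂ)) *ᵥ y1 := hstep2
      _ = star x1 ⬝ᵥ η *ᵥ x1 := hform.symm
  -- now take c := min c₀ 1
  refine ⟨min c₀ 1, lt_min hc0pos one_pos, min_le_right _ _, ?_⟩
  have hle : min c₀ 1 ≤ c₀ := min_le_left _ _
  have hsub : η - ((min c₀ 1 : ℝ) : ℂ) • ρ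
      = (η - ((c₀ : ℝ) : ℂ) • ρ) + (((c₀ - min c₀ 1 : ℝ) : ℂ) • ρ) := by
    push_cast
    rw [sub_smul]
    abel
  rw [hsub]
  exact hcore.add (psd_smul hρ.1 (by linarith))

end ErgAux
namespace ErgAux
open Matrix
variable {d : ℕ}

lemma psd_mul_trace_nonneg {A B : Mat d} (hA : A.PosSemidef) (hB : B.PosSemidef) :
    0 ≤ (A * B).trace := by
  obtain ⟨C, rfl⟩ := psd_eq_ct_mul_self hB
  have h1 : (A * (Cᴴ * C)).trace = (C * A * Cᴴ).trace := by
    rw [← Matrix.mul_assoc, trace_mul_cycle]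
  rw [h1]
  exact psd_trace_nonneg (hA.mul_mul_conjTranspose_same C)

lemma trace_mul_mono {A B C : Mat d} (hAB : (B - A).PosSemidef) (hC : C.PosSemidef) :
    (A * C).trace ≤ (B * C).trace := by
  have h1 := psd_mul_trace_nonneg hAB hC
  rw [Matrix.sub_mul, trace_sub, sub_nonneg] at h1
  exact h1

lemma posP_mul_negP {A : Mat d} (hA : A.IsHermitian) : posP hA * negP hA = 0 := by
  rw [posP, negP, specF_mul]
  have h1 : (fun x : ℝ => max x 0 * max (-x) 0) = fun _ => (0:ℝ) := by
    funext x
    rcases le_total x 0 with h | h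
    · rw [max_eq_right h, zero_mul]
    · rw [max_eq_right (neg_nonpos_of_nonneg h), mul_zero]
  rw [h1]
  unfold specF
  have h2 : (fun _ : Fin d => ((0:ℝ) : ℂ)) = fun _ : Fin d => (0:ℂ) := by push_cast; rfl
  rw [h2, diagonal_zero, Matrix.mul_zero, Matrix.zero_mul]

lemma comb_fixed_unique {p : ℝ} {Φ Φ' : Mat d →ₗ[ℂ] Mat d}
    (hΦ : IsCPTP Φ) (hΦ' : IsCPTP Φ') (hE : IsErgodic Φ)
    {ρs : Mat d} (hρs : IsDensity ρs) (hfixρ : Φ ρs = ρs) (hp : 0 < p) (hp1 : p ≤ 1)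
    {ρ1 ρ2 : Mat d} (h1 : IsDensity ρ1)
    (hf1 : ((p : ℂ) • Φ + ((1 - p : ℝ) : ℂ) • Φ') ρ1 = ρ1)
    (h2 : IsDensity ρ2)
    (hf2 : ((p : ℂ) • Φ + ((1 - p : ℝ) : ℂ) • Φ') ρ2 = ρ2) :
    ρ1 = ρ2 := by
  by_contra hne
  have hΨ : IsCPTP ((p : ℂ) • Φ + ((1 - p : ℝ) : ℂ) • Φ') := comb_cptp hp.le hp1 hΦ hΦ'
  have hδH : (ρ1 - ρ2).IsHermitian := by
    unfold Matrix.IsHermitian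
    rw [conjTranspose_sub, h1.1.1, h2.1.1]
  have hδfix : ((p : ℂ) • Φ + ((1 - p : ℝ) : ℂ) • Φ') (ρ1 - ρ2) = ρ1 - ρ2 := by
    rw [map_sub, hf1, hf2]
  obtain ⟨hposfix, hnegfix⟩ := fixed_parts hΨ hδH hδfix
  have htrδ : (ρ1 - ρ2).trace = 0 := by rw [trace_sub, h1.2, h2.2, sub_self]
  have htrpn : (posP hδH).trace = (negP hδH).trace := by
    have h3 : (posP hδH - negP hδH).trace = 0 := by rw [posP_sub_negP]; exact htrδ
    rw [trace_sub, sub_eq_zero] at h3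
    exact h3
  have hδne : ρ1 - ρ2 ≠ 0 := fun h => hne (sub_eq_zero.mp h)
  have hpos0 : posP hδH ≠ 0 := by
    intro h0
    apply hδne
    have h4 : (negP hδH).trace = 0 := by rw [← htrpn, h0, trace_zero]
    have h5 : negP hδH = 0 := psd_trace_zero (negP_psd hδH) h4
    rw [← posP_sub_negP hδH, h0, h5, sub_zero]
  have hneg0 : negP hδH ≠ 0 := by
    intro h0
    apply hδne
    have h4 : (posP hδH).trace = 0 := by rw [htrpn, h0, trace_zero]
    have h5 : posP hδH = 0 := psd_trace_zero (posP_psd hδH) h4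
    rw [← posP_sub_negP hδH, h0, h5, sub_zero]
  obtain ⟨t1, ht1, hω1⟩ := psd_normalize (posP_psd hδH) hpos0
  obtain ⟨t2, ht2, hω2⟩ := psd_normalize (negP_psd hδH) hneg0
  set ω1 : Mat d := ((t1 : ℂ))⁻¹ • posP hδH with hw1
  set ω2 : Mat d := ((t2 : ℂ))⁻¹ • negP hδH with hw2
  have hω1fix : ((p : ℂ) • Φ + ((1 - p : ℝ) : ℂ) • Φ') ω1 = ω1 := by
    rw [hw1, LinearMap.map_smul, hposfix]
  have hω2fix : ((p : ℂ) • Φ + ((1 - p : ℝ) : ℂ) • Φ') ω2 = ω2 := by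
    rw [hw2, LinearMap.map_smul, hnegfix]
  have hker1 := fixed_density_kernel ⟨hΦ.choose, hΦ.choose_spec.choose,
    hΦ.choose_spec.choose_spec⟩ hΦ' hE hρs hfixρ hp hp1 hω1 hω1fix
  have hker2 := fixed_density_kernel ⟨hΦ.choose, hΦ.choose_spec.choose,
    hΦ.choose_spec.choose_spec⟩ hΦ' hE hρs hfixρ hp hp1 hω2 hω2fix
  obtain ⟨c1, hc1pos, hc11, hd1⟩ := exists_dominating_coeff hω1 hρs hker1
  obtain ⟨c2, hc2pos, hc21, hd2⟩ := exists_dominating_coeff hω2 hρs hker2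
  -- ω1 * ω2 has zero trace
  have horth : (ω1 * ω2).trace = 0 := by
    rw [hw1, hw2, Matrix.smul_mul, Matrix.mul_smul, posP_mul_negP, smul_zero, smul_zero,
      trace_zero]
  have hchain : ((((c1 : ℝ) : ℂ)) • ρs * (((c2 : ℝ) : ℂ) • ρs)).trace ≤ 0 := by
    calc ((((c1 : ℝ) : ℂ)) • ρs * (((c2 : ℝ) : ℂ) • ρs)).trace
        ≤ (ω1 * (((c2 : ℝ) : ℂ) • ρs)).trace :=
          trace_mul_mono hd1 (psd_smul hρs.1 hc2pos.le)
    _ = ((((c2 : ℝ) : ℂ) • ρs) * ω1).trace := trace_mul_comm _ _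
    _ ≤ (ω2 * ω1).trace := trace_mul_mono hd2 hω1.1
    _ = (ω1 * ω2).trace := trace_mul_comm _ _
    _ = 0 := horth
  have hlhs : ((((c1 : ℝ) : ℂ)) • ρs * (((c2 : ℝ) : ℂ) • ρs)).trace
      = (((c1 * c2 : ℝ) : ℂ)) * (ρs * ρs).trace := by
    rw [Matrix.smul_mul, Matrix.mul_smul, smul_smul, trace_smul, smul_eq_mul]
    push_cast
    ring
  rw [hlhs] at hchain
  have hnn : 0 ≤ (ρs * ρs).trace := psd_mul_trace_nonneg hρs.1 hρs.1
  have hc12 : (0:ℂ) < ((c1 * c2 : ℝ) : ℂ) := by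
    rw [Complex.zero_lt_real]
    exact mul_pos hc1pos hc2pos
  have hTz : ((c1 * c2 : ℝ) : ℂ) * (ρs * ρs).trace = 0 :=
    le_antisymm hchain (mul_nonneg hc12.le hnn)
  have htr0 : (ρs * ρs).trace = 0 := by
    rcases mul_eq_zero.mp hTz with h | h
    · exact absurd h hc12.ne'
    · exact h
  have h9 : ρsᴴ * ρs = 0 := by
    refine psd_trace_zero (posSemidef_conjTranspose_mul_self ρs) ?_
    rw [hρs.1.1]
    exact htr0
  have h10 : ρs = 0 := conjTranspose_mul_self_eq_zero.mp h9
  have h11 := hρs.2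
  rw [h10, trace_zero] at h11
  exact zero_ne_one h11

end ErgAux
namespace ErgAux
open Matrix
variable {d : ℕ}

lemma cptp_exists_fixed_density {Θ : Mat d →ₗ[ℂ] Mat d} (hΘ : IsCPTP Θ) (hd : 0 < d) :
    ∃ ω : Mat d, IsDensity ω ∧ Θ ω = ω := by
  have h1ne : (1 : Mat d).trace ≠ 0 := by
    rw [trace_one]
    simp only [Fintype.card_fin]
    exact Nat.cast_ne_zero.mpr hd.ne'
  obtain ⟨Y, -, hY0, hYherm, hYfix⟩ := exists_herm_fixed Θ (cptp_trace hΘ) (cptp_conjT hΘ)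
    ⊤ (fun A _ => Submodule.mem_top) (fun A _ => Submodule.mem_top) 1 Submodule.mem_top h1ne
  obtain ⟨hposfix, hnegfix⟩ := fixed_parts hΘ hYherm hYfix
  have hZ : ∃ Z : Mat d, Z.PosSemidef ∧ Z ≠ 0 ∧ Θ Z = Z := by
    by_cases hpos0 : posP hYherm = 0
    · refine ⟨negP hYherm, negP_psd hYherm, ?_, hnegfix⟩
      intro h0
      apply hY0
      rw [← posP_sub_negP hYherm, hpos0, h0, sub_zero]
    · exact ⟨posP hYherm, posP_psd hYherm, hpos0, hposfix⟩
  obtain ⟨Z, hZpsd, hZ0, hZfix⟩ := hZ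
  obtain ⟨t, ht, htd⟩ := psd_normalize hZpsd hZ0
  exact ⟨((t : ℂ))⁻¹ • Z, htd, by rw [LinearMap.map_smul, hZfix]⟩

end ErgAux

theorem ergodic_stable_under_randomization' {d : ℕ} (Φ Φ' : Mat d →ₗ[ℂ] Mat d)
    (hΦ : IsCPTP Φ) (hΦ' : IsCPTP Φ') (hE : IsErgodic Φ)
    (ρs : Mat d) (hρs : IsDensity ρs) (hfix : Φ ρs = ρs)
    (p : ℝ) (hp : 0 < p) (hp1 : p ≤ 1) :
    IsErgodic ((p : ℂ) • Φ + ((1 - p : ℝ) : ℂ) • Φ') ∧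
    ∀ ρp : Mat d, IsDensity ρp → ((p : ℂ) • Φ + ((1 - p : ℝ) : ℂ) • Φ') ρp = ρp →
      ∃ π : ℝ, 0 < π ∧ π ≤ 1 ∧ ∃ σ : Mat d, IsDensity σ ∧
        ρp = (π : ℂ) • ρs + ((1 - π : ℝ) : ℂ) • σ := by
  have hd : 0 < d := by
    by_contra h
    push_neg at h
    interval_cases d
    have h2 := hρs.2
    rw [Matrix.trace_eq_zero_of_isEmpty] at h2
    exact zero_ne_one h2
  constructor
  · obtain ⟨ω, hω, hωfix⟩ := ErgAux.cptp_exists_fixed_density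
      (ErgAux.comb_cptp hp.le hp1 hΦ hΦ') hd
    refine ⟨ω, ⟨hω, hωfix⟩, ?_⟩
    intro ρ' h'
    exact ErgAux.comb_fixed_unique hΦ hΦ' hE hρs hfix hp hp1 h'.1 h'.2 hω hωfix
  · intro ρp hρp hfixp
    have hker := ErgAux.fixed_density_kernel hΦ hΦ' hE hρs hfix hp hp1 hρp hfixp
    obtain ⟨c, hc0, hc1, hpsd⟩ := ErgAux.exists_dominating_coeff hρp hρs hker
    rcases eq_or_lt_of_le hc1 with hceq | hclt
    · -- c = 1 : ρp = ρs
      subst hceq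
      have htr : (ρp - (((1:ℝ) : ℝ) : ℂ) • ρs).trace = 0 := by
        rw [trace_sub, trace_smul, hρp.2, hρs.2]
        norm_num
      have h0 := sub_eq_zero.mp (ErgAux.psd_trace_zero hpsd htr)
      refine ⟨1, one_pos, le_refl 1, ρs, hρs, ?_⟩
      rw [h0]
      norm_num
    · -- c < 1
      refine ⟨c, hc0, hc1, (((1 - c)⁻¹ : ℝ) : ℂ) • (ρp - ((c : ℝ) : ℂ) • ρs), ⟨?_, ?_⟩, ?_⟩
      · exact ErgAux.psd_smul hpsd (inv_nonneg.mpr (by linarith))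
      · rw [trace_smul, trace_sub, trace_smul, hρp.2, hρs.2]
        simp only [smul_eq_mul, mul_one]
        have hne : (1 - c : ℝ) ≠ 0 := by linarith
        rw [show ((1:ℂ) - (c:ℂ)) = ((1 - c : ℝ) : ℂ) by push_cast; ring,
          ← Complex.ofReal_mul, inv_mul_cancel₀ hne, Complex.ofReal_one]
      · rw [smul_smul]
        have hcc : ((1 - c : ℝ) : ℂ) * (((1 - c)⁻¹ : ℝ) : ℂ) = 1 := by
          have hne : (1 - c : ℝ) ≠ 0 := by linarith
          rw [← Complex.ofReal_mul, mul_inv_cancel₀ hne, Complex.ofReal_one]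
        rw [hcc, one_smul]
        abel
/-- Stability of ergodicity under randomization: a convex combination of an ergodic channel
with an arbitrary channel is ergodic, and its fixed point state is a convex combination of the
original fixed point state with some state. -/
theorem ergodic_stable_under_randomization {d : ℕ} (Φ Φ' : Mat d →ₗ[ℂ] Mat d)
    (hΦ : IsCPTP Φ) (hΦ' : IsCPTP Φ') (hE : IsErgodic Φ)
    (ρs : Mat d) (hρs : IsDensity ρs) (hfix : Φ ρs = ρs)
    (p : ℝ) (hp : 0 < p) (hp1 : p ≤ 1) :
    IsErgodic ((p : ℂ) • Φ + ((1 - p : ℝ) : ℂ) • Φ') ∧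
    ∀ ρp : Mat d, IsDensity ρp → ((p : ℂ) • Φ + ((1 - p : ℝ) : ℂ) • Φ') ρp = ρp →
      ∃ π : ℝ, 0 < π ∧ π ≤ 1 ∧ ∃ σ : Mat d, IsDensity σ ∧
        ρp = (π : ℂ) • ρs + ((1 - π : ℝ) : ℂ) • σ := by
  exact ergodic_stable_under_randomization' Φ Φ' hΦ hΦ' hE ρs hρs hfix p hp hp1
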